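/- Let A ⊆ F_q with 0, 1 ∈ A, and suppose the ratio set R(A,A) = {(a₁ - a₂)/(a₃ - a₄) : aᵢ ∈ A, a₃ ≠ a₄} satisfies 1 + R(A,A) ⊆ R(A,A), A · R(A,A) ⊆ R(A,A), and (A∖{0})⁻¹ · R(A,A) ⊆ R(A,A). Then for every polynomial F in n variables with integer coefficients, F(A, …, A) + R(A,A) ⊆ R(A,A), where F(A,…,A) = {F(a₁,…,a_n) : aᵢ ∈ A}. -/

import Mathlib

/-- The ratio set `R(A,A) = {(a₁-a₂)/(a₃-a₄) : aᵢ ∈ A, a₃ ≠ a₄}`. -/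
def ratioSet {F : Type*} [Field F] (A : Set F) : Set F :=
  {x | ∃ a₁ ∈ A, ∃ a₂ ∈ A, ∃ a₃ ∈ A, ∃ a₄ ∈ A, a₃ ≠ a₄ ∧ x = (a₁ - a₂) / (a₃ - a₄)}

theorem polynomial_image_translate_ratioSet {F : Type*} [Field F] [Fintype F]
    (A : Set F) (h0 : (0 : F) ∈ A) (h1 : (1 : F) ∈ A)
    (hadd : ∀ r ∈ ratioSet A, 1 + r ∈ ratioSet A)
    (hmul : ∀ a ∈ A, ∀ r ∈ ratioSet A, a * r ∈ ratioSet A)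
    (hinv : ∀ a ∈ A, a ≠ 0 → ∀ r ∈ ratioSet A, a⁻¹ * r ∈ ratioSet A) :
    ∀ (n : ℕ) (P : MvPolynomial (Fin n) ℤ) (a : Fin n → F),
      (∀ i, a i ∈ A) → ∀ r ∈ ratioSet A, MvPolynomial.aeval a P + r ∈ ratioSet A := by
  -- The shift-by-one map is a bijection of the finite set `ratioSet A`.
  have hfin : (ratioSet A).Finite := Set.toFinite _
  have hbij : Set.BijOn (fun r : F => 1 + r) (ratioSet A) (ratioSet A) := by
    rw [← Set.Finite.injOn_iff_bijOn_of_mapsTo hfin (fun r hr => hadd r hr)]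
    intro x _ y _ h
    simpa using h
  have hsub : ∀ r ∈ ratioSet A, r - 1 ∈ ratioSet A := by
    intro r hr
    obtain ⟨s, hs, hse⟩ := hbij.surjOn hr
    have : s = r - 1 := by simp only at hse; rw [← hse]; ring
    rwa [← this]
  -- integer shifts preserve ratioSet
  have hint : ∀ c : ℤ, ∀ r ∈ ratioSet A, (c : F) + r ∈ ratioSet A := by
    intro c
    induction c using Int.induction_on with
    | zero => simpa using fun r hr => hr
    | succ k ih =>
      intro r hr
      have := hadd _ (ih r hr)
      push_cast
      push_cast at this
      convert this using 1
      ring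
    | pred k ih =>
      intro r hr
      have := hsub _ (ih r hr)
      push_cast
      push_cast at this
      convert this using 1
      ring
  intro n P a ha
  induction P using MvPolynomial.induction_on with
  | C c =>
    intro r hr
    simpa using hint c r hr
  | add p q ihp ihq =>
    intro r hr
    have h1 := ihp _ (ihq r hr)
    convert h1 using 1
    simp
    ring
  | mul_X p i ihp =>
    intro r hr
    by_cases hai : a i = 0
    · simpa [hai] using hr
    · have hr' := hinv (a i) (ha i) hai r hr
      have h2 := hmul (a i) (ha i) _ (ihp _ hr')
      convert h2 using 1
      field_simp
      rw [map_mul, MvPolynomial.aeval_X, mul_comm]
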